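/- Let (X,d) be a metric space and let γ : S¹ → X be an embedded circle (a Jordan curve) with compact image. Suppose the image Γ of γ admits an open cover by sets U_i such that on each U_i the curve satisfies a k_i-bounded turning condition (for all x, y ∈ Γ ∩ U_i, some connected component of Γ \ {x,y} has diameter at most k_i·d(x,y)). Then Γ satisfies a global k-bounded turning condition for some constant k < ∞. -/

import Mathlib

/-- Localization of the bounded turning condition: if a Jordan curve (embedded circle
with compact image) in a metric space satisfies a `k i`-bounded turning condition on
each element `U i` of an open cover of its image, then it satisfies a global
`k₀`-bounded turning condition for some `k₀`. -/
theorem bounded_turning_localizes {X : Type*} [MetricSpace X]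
    (γ : AddCircle (1 : ℝ) → X) (hcont : Continuous γ) (hinj : Function.Injective γ)
    {ι : Type*} (U : ι → Set X) (hopen : ∀ i, IsOpen (U i))
    (hcover : Set.range γ ⊆ ⋃ i, U i) (k : ι → ℝ)
    (hloc : ∀ i, ∀ x ∈ Set.range γ ∩ U i, ∀ y ∈ Set.range γ ∩ U i, x ≠ y →
      ∃ z ∈ Set.range γ \ {x, y},
        Metric.diam (connectedComponentIn (Set.range γ \ {x, y}) z) ≤ k i * dist x y) :
    ∃ k₀ : ℝ, ∀ x ∈ Set.range γ, ∀ y ∈ Set.range γ, x ≠ y →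
      ∃ z ∈ Set.range γ \ {x, y},
        Metric.diam (connectedComponentIn (Set.range γ \ {x, y}) z) ≤ k₀ * dist x y := by
  have : Fact ((0:ℝ) < 1) := ⟨one_pos⟩
  have hinf : Infinite (AddCircle (1 : ℝ)) := by
    have h01 : (Set.Ico (0:ℝ) (0 + 1)).Infinite := Set.Ico_infinite (by norm_num)
    have : Infinite (Set.Ico (0:ℝ) (0 + 1)) := Set.infinite_coe_iff.mpr h01
    exact Infinite.of_injective _ (AddCircle.equivIco 1 0).symm.injective
  set Γ := Set.range γ with hΓ
  have hΓinf : Γ.Infinite := Set.infinite_range_of_injective hinj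
  have hcomp : IsCompact Γ := isCompact_range hcont
  obtain ⟨t, ht⟩ := hcomp.elim_finite_subcover U hopen hcover
  have htne : t.Nonempty := by
    rcases Finset.eq_empty_or_nonempty t with rfl | h
    · exfalso
      obtain ⟨x, hx⟩ := hΓinf.nonempty
      simpa using ht hx
    · exact h
  have hcov' : Γ ⊆ ⋃ i : t, U i := by
    intro x hx
    obtain ⟨i, hi, hxi⟩ := Set.mem_iUnion₂.mp (ht hx)
    exact Set.mem_iUnion.mpr ⟨⟨i, hi⟩, hxi⟩
  obtain ⟨δ, hδ, hleb⟩ := lebesgue_number_lemma_of_metric hcomp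
    (fun i : t => hopen i) hcov'
  set D := Metric.diam Γ / δ with hD
  have hDnn : 0 ≤ D := div_nonneg Metric.diam_nonneg hδ.le
  set k₀ := max (t.sup' htne k) D with hk₀
  refine ⟨k₀, fun x hx y hy hxy => ?_⟩
  rcases lt_or_ge (dist x y) δ with hlt | hge
  · -- local case
    obtain ⟨i, hi⟩ := hleb x hx
    have hxU : x ∈ U i := hi (Metric.mem_ball_self hδ)
    have hyU : y ∈ U i := hi (by simpa [Metric.mem_ball, dist_comm] using hlt)
    obtain ⟨z, hz, hzd⟩ := hloc i x ⟨hx, hxU⟩ y ⟨hy, hyU⟩ hxy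
    refine ⟨z, hz, hzd.trans ?_⟩
    have hki : k i ≤ k₀ := le_trans (Finset.le_sup' k i.2) (le_max_left _ _)
    exact mul_le_mul_of_nonneg_right hki dist_nonneg
  · -- global case
    obtain ⟨z, hz⟩ := (hΓinf.diff ((Set.finite_singleton y).insert x)).nonempty
    refine ⟨z, hz, ?_⟩
    have hsub : connectedComponentIn (Γ \ {x, y}) z ⊆ Γ :=
      (connectedComponentIn_subset _ _).trans Set.diff_subset
    have h1 : Metric.diam (connectedComponentIn (Γ \ {x, y}) z) ≤ Metric.diam Γ :=
      Metric.diam_mono hsub hcomp.isBounded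
    refine h1.trans ?_
    have : Metric.diam Γ = D * δ := by rw [hD, div_mul_cancel₀ _ hδ.ne']
    rw [this]
    exact mul_le_mul (le_max_right _ _) hge hδ.le (le_trans hDnn (le_max_right _ _))
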